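/- Let 𝔉 be a clonable family of r-graphs. For every ε>0 there exists n0 such that for all integers n2 ≥ n1 ≥ n0, m(𝔉, n2) ≥ m(𝔉, n1) + (n2 − n1)·(r·m(𝔉) − ε)·n1^{r-1}. -/

import Mathlib

open Filter

namespace TuranGT

/-- An `r`-graph: an `r`-uniform hypergraph with vertex set `{0, ..., n-1} ⊆ ℕ`. -/
structure RGraph (r : ℕ) where
  n : ℕ
  edges : Finset (Finset ℕ)
  uniform : ∀ e ∈ edges, e.card = r
  valid : ∀ e ∈ edges, ∀ v ∈ e, v < n

variable {r : ℕ}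

/-- The link of a vertex `v`: the set of `(r-1)`-sets `I` with `I ∪ {v}` an edge. -/
def link (F : RGraph r) (v : ℕ) : Finset (Finset ℕ) :=
  (F.edges.filter fun e => v ∈ e).image fun e => e.erase v

/-- `G` contains a copy of `H` as a subgraph. -/
def ContainsCopy (G H : RGraph r) : Prop :=
  ∃ f : ℕ → ℕ, Set.InjOn f (Set.Iio H.n) ∧ (∀ v < H.n, f v < G.n) ∧
    ∀ e ∈ H.edges, e.image f ∈ G.edges

/-- `G` is `𝔉`-free: it contains no member of `𝔉` as a subgraph. -/
def FreeFam (𝔉 : Set (RGraph r)) (G : RGraph r) : Prop :=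
  ∀ H ∈ 𝔉, ¬ ContainsCopy G H

/-- The Turán number `ex(n, 𝔉)`. -/
noncomputable def exNum (r n : ℕ) (𝔉 : Set (RGraph r)) : ℕ :=
  sSup {k | ∃ G : RGraph r, G.n = n ∧ FreeFam 𝔉 G ∧ G.edges.card = k}

/-- `φ` witnesses that `G` is a blowup of `F`: fibers of `φ` form a blowup partition. -/
def IsBlowupMap (F G : RGraph r) (φ : ℕ → ℕ) : Prop :=
  (∀ v < G.n, φ v < F.n) ∧
    ∀ e : Finset ℕ, e ∈ G.edges ↔
      ((∀ v ∈ e, v < G.n) ∧ Set.InjOn φ (e : Set ℕ) ∧ e.image φ ∈ F.edges)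

/-- `G` is (isomorphic to) a blowup of `F` (cloning and deleting vertices). -/
def IsBlowup (F G : RGraph r) : Prop := ∃ φ : ℕ → ℕ, IsBlowupMap F G φ

/-- The family `𝔅(S)` of all blowups of `S`. -/
def blowupFam (S : RGraph r) : Set (RGraph r) := {G | IsBlowup S G}

/-- A family is clonable if it is closed under taking blowups. -/
def Clonable (𝔉 : Set (RGraph r)) : Prop :=
  ∀ F ∈ 𝔉, ∀ G : RGraph r, IsBlowup F G → G ∈ 𝔉

/-- `m(𝔉, n)`: maximum number of edges of an `n`-vertex member of `𝔉`. -/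
noncomputable def mFam (𝔉 : Set (RGraph r)) (n : ℕ) : ℕ :=
  sSup {k | ∃ F ∈ 𝔉, F.n = n ∧ F.edges.card = k}

/-- `m(𝔉) = lim_{n → ∞} m(𝔉, n)/n^r` (when the family is smooth). -/
noncomputable def mDen (𝔉 : Set (RGraph r)) : ℝ :=
  limUnder atTop fun n : ℕ => (mFam 𝔉 n : ℝ) / (n : ℝ) ^ r

/-- The edit distance `d_𝔥(F)` from `F` to the family `𝔥`. -/
noncomputable def distFam (𝔥 : Set (RGraph r)) (F : RGraph r) : ℝ :=
  sInf {x : ℝ | ∃ H ∈ 𝔥, H.n = F.n ∧ x = ((symmDiff F.edges H.edges).card : ℝ)}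

/-- `μ` is a probability distribution on the vertex set of `F`. -/
def IsWeight (F : RGraph r) (μ : ℕ → ℝ) : Prop :=
  (∀ v, 0 ≤ μ v) ∧ (∀ v, F.n ≤ v → μ v = 0) ∧ ∑ v ∈ Finset.range F.n, μ v = 1

/-- Weighted density `λ(F, μ)`. -/
noncomputable def lamW (F : RGraph r) (μ : ℕ → ℝ) : ℝ :=
  ∑ e ∈ F.edges, ∏ v ∈ e, μ v

/-- The Lagrangian `λ(F)`. -/
noncomputable def lagrangian (F : RGraph r) : ℝ :=
  sSup {x : ℝ | ∃ μ, IsWeight F μ ∧ x = lamW F μ}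

/-- `λ(𝔥)` for a family of r-graphs. -/
noncomputable def lamFam (𝔥 : Set (RGraph r)) : ℝ :=
  sSup {x : ℝ | ∃ H ∈ 𝔥, ∃ μ, IsWeight H μ ∧ x = lamW H μ}

/-- The uniform distribution `ξ_F`. -/
noncomputable def uniformW (F : RGraph r) : ℕ → ℝ :=
  fun v => if v < F.n then ((F.n : ℝ))⁻¹ else 0

/-- `(G, ν)` is a blowup of the weighted graph `(F, μ)`. -/
def WIsBlowup (F : RGraph r) (μ : ℕ → ℝ) (G : RGraph r) (ν : ℕ → ℝ) : Prop :=
  IsWeight G ν ∧ ∃ φ : ℕ → ℕ, IsBlowupMap F G φ ∧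
    ∀ i < F.n, μ i = ∑ v ∈ (Finset.range G.n).filter (fun v => φ v = i), ν v

/-- `d'(F1, F2, μ)` for graphs on a common vertex set. -/
noncomputable def dPrime (E1 E2 : Finset (Finset ℕ)) (μ : ℕ → ℝ) : ℝ :=
  ∑ e ∈ symmDiff E1 E2, ∏ v ∈ e, μ v

/-- The distance between weighted `r`-graphs. -/
noncomputable def wDist (F1 : RGraph r) (μ1 : ℕ → ℝ) (F2 : RGraph r) (μ2 : ℕ → ℝ) : ℝ :=
  sInf {x : ℝ | ∃ (G1 G2 : RGraph r) (ν : ℕ → ℝ), G1.n = G2.n ∧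
    WIsBlowup F1 μ1 G1 ν ∧ WIsBlowup F2 μ2 G2 ν ∧ x = dPrime G1.edges G2.edges ν}

/-- The weighted distance `d^w_𝔥(F, μ)` from a weighted graph to a family. -/
noncomputable def wDistFam (𝔥 : Set (RGraph r)) (F : RGraph r) (μ : ℕ → ℝ) : ℝ :=
  sInf {x : ℝ | ∃ H ∈ 𝔥, ∃ ν, IsWeight H ν ∧ x = wDist F μ H ν}

/-- `𝔉` is `(𝔥, ε, α)`-locally stable. -/
def LocallyStable (𝔉 𝔥 : Set (RGraph r)) (ε α : ℝ) : Prop :=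
  ∃ n0 : ℕ, ∀ F ∈ 𝔉, n0 ≤ F.n → distFam 𝔥 F ≤ ε * (F.n : ℝ) ^ r →
    (F.edges.card : ℝ) ≤ (mFam 𝔥 F.n : ℝ) - α * distFam 𝔥 F

/-- `𝔉` is `𝔥`-locally stable. -/
def HLocallyStable (𝔉 𝔥 : Set (RGraph r)) : Prop :=
  ∃ ε > (0 : ℝ), ∃ α > (0 : ℝ), LocallyStable 𝔉 𝔥 ε α

/-- `𝔉` is `𝔥`-stable, i.e. `(𝔥, 1, α)`-locally stable for some `α > 0`. -/
def HStable (𝔉 𝔥 : Set (RGraph r)) : Prop :=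
  ∃ α > (0 : ℝ), LocallyStable 𝔉 𝔥 1 α

/-- `𝔉` is `(𝔥, ε, α)`-vertex locally stable. -/
def VertexLocallyStable (𝔉 𝔥 : Set (RGraph r)) (ε α : ℝ) : Prop :=
  ∃ n0 : ℕ, ∀ F ∈ 𝔉, n0 ≤ F.n → distFam 𝔥 F ≤ ε * (F.n : ℝ) ^ r →
    (∀ v < F.n, ((r : ℝ) * mDen 𝔥 - ε) * (F.n : ℝ) ^ (r - 1) ≤ ((link F v).card : ℝ)) →
    (F.edges.card : ℝ) ≤ (mFam 𝔥 F.n : ℝ) - α * distFam 𝔥 F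

/-- `𝔉` is `𝔥`-vertex locally stable. -/
def HVertexLocallyStable (𝔉 𝔥 : Set (RGraph r)) : Prop :=
  ∃ ε > (0 : ℝ), ∃ α > (0 : ℝ), VertexLocallyStable 𝔉 𝔥 ε α

/-- `𝔉` is `(𝔥, ε, α)`-weight locally stable. -/
def WeightLocallyStable (𝔉 𝔥 : Set (RGraph r)) (ε α : ℝ) : Prop :=
  ∀ F ∈ 𝔉, ∀ μ : ℕ → ℝ, IsWeight F μ → wDistFam 𝔥 F μ ≤ ε →
    lamW F μ ≤ lamFam 𝔥 - α * wDistFam 𝔥 F μ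

/-- `𝔉` is `𝔥`-weight locally stable. -/
def HWeightLocallyStable (𝔉 𝔥 : Set (RGraph r)) : Prop :=
  ∃ ε > (0 : ℝ), ∃ α > (0 : ℝ), WeightLocallyStable 𝔉 𝔥 ε α

/-- `𝔉` is `𝔥`-weight stable: `(𝔥, 1, α)`-weight locally stable for some `α > 0`. -/
def HWeightStable (𝔉 𝔥 : Set (RGraph r)) : Prop :=
  ∃ α > (0 : ℝ), WeightLocallyStable 𝔉 𝔥 1 α

/-- `𝔉` is `𝔥`-weakly weight stable. -/
def WeaklyWeightStable (𝔉 𝔥 : Set (RGraph r)) : Prop :=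
  ∀ ε > (0 : ℝ), ∃ δ > (0 : ℝ), ∀ F ∈ 𝔉, ∀ μ : ℕ → ℝ, IsWeight F μ →
    lamFam 𝔥 - δ ≤ lamW F μ → wDistFam 𝔥 F μ ≤ ε

/-- The generalized triangle `T_r` on vertex set `{0, ..., 2r-2}` (for `r ≥ 2`),
with edges `D1 = {0,...,r-1}`, `D2 = {0,...,r-2} ∪ {r}`, `D3 = {r-1, r, ..., 2r-2}`. -/
def genTriangle (r : ℕ) : RGraph r where
  n := 2 * r - 1
  edges :=
    if _h : 2 ≤ r then
      {Finset.range r, insert r (Finset.range (r - 1)), Finset.Ico (r - 1) (2 * r - 1)}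
    else ∅
  uniform := by
    intro e he
    split_ifs at he with h
    · simp only [Finset.mem_insert, Finset.mem_singleton] at he
      rcases he with rfl | rfl | rfl
      · exact Finset.card_range r
      · rw [Finset.card_insert_of_notMem (by simp only [Finset.mem_range]; omega),
          Finset.card_range]
        omega
      · rw [Nat.card_Ico]
        omega
    · simp at he
  valid := by
    intro e he v hv
    split_ifs at he with h
    · simp only [Finset.mem_insert, Finset.mem_singleton] at he
      rcases he with rfl | rfl | rfl
      · simp only [Finset.mem_range] at hv; omega
      · simp only [Finset.mem_insert, Finset.mem_range] at hv; omega
      · simp only [Finset.mem_Ico] at hv; omega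
    · simp at he

/-- The family `Σ_r`: all `r`-graphs with three edges `D1, D2, D3` such that
`|D1 ∩ D2| = r - 1` and `D1 △ D2 ⊆ D3`. -/
def SigmaFam (r : ℕ) : Set (RGraph r) :=
  {G | ∃ D1 D2 D3 : Finset ℕ, G.edges = {D1, D2, D3} ∧
    D1 ≠ D2 ∧ D1 ≠ D3 ∧ D2 ≠ D3 ∧
    (D1 ∩ D2).card = r - 1 ∧ symmDiff D1 D2 ⊆ D3}

/-- The complete graph `K_t` as a `2`-graph. -/
def completeGraph (t : ℕ) : RGraph 2 where
  n := t
  edges := Finset.powersetCard 2 (Finset.range t)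
  uniform := fun _e he => (Finset.mem_powersetCard.1 he).2
  valid := fun _e he v hv => Finset.mem_range.1 ((Finset.mem_powersetCard.1 he).1 hv)

/-- `S` is an `(m, r, r-1)` Steiner system: each `(r-1)`-subset of the vertex set
lies in exactly one edge. -/
def IsSteiner (m : ℕ) (S : RGraph r) : Prop :=
  S.n = m ∧ ∀ I : Finset ℕ, (∀ v ∈ I, v < S.n) → I.card = r - 1 →
    ∃! e, e ∈ S.edges ∧ I ⊆ e

/-- `F` covers pairs: every two vertices lie in a common edge. -/
def CoversPairs (F : RGraph r) : Prop :=
  ∀ u < F.n, ∀ v < F.n, ∃ e ∈ F.edges, u ∈ e ∧ v ∈ e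

/-- Isomorphism of `r`-graphs. -/
def Isomorphic (F G : RGraph r) : Prop :=
  F.n = G.n ∧ ∃ f : ℕ → ℕ, Set.InjOn f (Set.Iio F.n) ∧ (∀ v < F.n, f v < G.n) ∧
    ∀ e : Finset ℕ, e ∈ F.edges ↔ ((∀ v ∈ e, v < F.n) ∧ e.image f ∈ G.edges)

/-- The support of a weighting. -/
noncomputable def suppW (F : RGraph r) (μ : ℕ → ℝ) : Finset ℕ :=
  (Finset.range F.n).filter fun v => μ v ≠ 0

/-- `G` is isomorphic to the subgraph of `F` induced on the vertex set `S`. -/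
def IsIsoInduced (F : RGraph r) (S : Finset ℕ) (G : RGraph r) : Prop :=
  ∃ f : ℕ → ℕ, Set.InjOn f (Set.Iio G.n) ∧ (Finset.range G.n).image f = S ∧
    ∀ e : Finset ℕ, e ∈ G.edges ↔ ((∀ v ∈ e, v < G.n) ∧ e.image f ∈ F.edges)

/-- An `r`-graph is thin if every `(r-1)`-set lies in at most one edge. -/
def ThinG (F : RGraph r) : Prop :=
  ∀ I : Finset ℕ, I.card = r - 1 → ∀ e1 ∈ F.edges, ∀ e2 ∈ F.edges,
    I ⊆ e1 → I ⊆ e2 → e1 = e2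

/-- A Steiner system (or any graph) is balanced if its Lagrangian is attained by
the uniform distribution. -/
def Balanced (F : RGraph r) : Prop := lagrangian F = lamW F (uniformW F)

/-- `e(m, r) = C(m, r-1) / (r m^r)`. -/
noncomputable def eDen (m r : ℕ) : ℝ :=
  (m.choose (r - 1) : ℝ) / ((r : ℝ) * (m : ℝ) ^ r)

/-- `d(m, r) = C(m-1, r-2) / ((r-1) m^{r-1})`. -/
noncomputable def dDen (m r : ℕ) : ℝ :=
  ((m - 1).choose (r - 2) : ℝ) / (((r : ℝ) - 1) * (m : ℝ) ^ (r - 1))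

/-- `S` is uniquely dense around `Σ_r`: the uniform weighting of `S` strictly maximizes the
weighted density among weighted `Σ_r`-free `r`-graphs covering pairs. -/
def UniquelyDense (S : RGraph r) : Prop :=
  (∀ F : RGraph r, FreeFam (SigmaFam r) F → CoversPairs F → ∀ μ : ℕ → ℝ, IsWeight F μ →
    lamW F μ ≤ lamW S (uniformW S)) ∧
  ∀ F : RGraph r, FreeFam (SigmaFam r) F → CoversPairs F → ∀ μ : ℕ → ℝ, IsWeight F μ →
    lamW F μ = lamW S (uniformW S) → Isomorphic F S ∧ μ = uniformW F

/-! ### Auxiliary lemmas for `mFam_growth` -/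

open Topology

section AuxGrowth

attribute [local instance] Classical.propDecidable

lemma edges_card_le (F : RGraph r) : F.edges.card ≤ (F.n).choose r := by
  have h : F.edges ⊆ (Finset.range F.n).powersetCard r := by
    intro e he
    rw [Finset.mem_powersetCard]
    exact ⟨fun v hv => Finset.mem_range.2 (F.valid e he v hv), F.uniform e he⟩
  calc F.edges.card ≤ _ := Finset.card_le_card h
    _ = _ := by rw [Finset.card_powersetCard, Finset.card_range]

lemma mSet_bddAbove (𝔉 : Set (RGraph r)) (n : ℕ) :
    BddAbove {k | ∃ F ∈ 𝔉, F.n = n ∧ F.edges.card = k} := by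
  refine ⟨n.choose r, ?_⟩
  rintro k ⟨F, _, rfl, rfl⟩
  exact edges_card_le F

lemma le_mFam {𝔉 : Set (RGraph r)} {F : RGraph r} (hF : F ∈ 𝔉) {n : ℕ} (hn : F.n = n) :
    F.edges.card ≤ mFam 𝔉 n :=
  le_csSup (mSet_bddAbove 𝔉 n) ⟨F, hF, hn, rfl⟩

lemma mFam_exists {𝔉 : Set (RGraph r)} {n : ℕ}
    (h : ∃ F ∈ 𝔉, F.n = n) : ∃ F ∈ 𝔉, F.n = n ∧ F.edges.card = mFam 𝔉 n := by
  obtain ⟨F, hF, hFn⟩ := h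
  have hne : {k | ∃ F ∈ 𝔉, F.n = n ∧ F.edges.card = k}.Nonempty := ⟨F.edges.card, F, hF, hFn, rfl⟩
  obtain ⟨G, hG, hGn, hGc⟩ := Nat.sSup_mem hne (mSet_bddAbove 𝔉 n)
  exact ⟨G, hG, hGn, hGc⟩

/-- A generic blowup of `F` with vertex set `range m` along a map `φ`. -/
noncomputable def cloneG (F : RGraph r) (m : ℕ) (φ : ℕ → ℕ) : RGraph r where
  n := m
  edges := ((Finset.range m).powersetCard r).filter
    (fun e => Set.InjOn φ ↑e ∧ e.image φ ∈ F.edges)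
  uniform := fun e he => (Finset.mem_powersetCard.1 (Finset.mem_filter.1 he).1).2
  valid := fun e he v hv =>
    Finset.mem_range.1 ((Finset.mem_powersetCard.1 (Finset.mem_filter.1 he).1).1 hv)

lemma cloneG_isBlowupMap (F : RGraph r) (m : ℕ) (φ : ℕ → ℕ) (h : ∀ v < m, φ v < F.n) :
    IsBlowupMap F (cloneG F m φ) φ := by
  constructor
  · exact h
  · intro e
    constructor
    · intro he
      rw [cloneG] at he
      simp only [Finset.mem_filter, Finset.mem_powersetCard] at he
      exact ⟨fun v hv => Finset.mem_range.1 (he.1.1 hv), he.2.1, he.2.2⟩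
    · rintro ⟨h1, h2, h3⟩
      rw [cloneG]
      simp only [Finset.mem_filter, Finset.mem_powersetCard]
      refine ⟨⟨fun v hv => Finset.mem_range.2 (h1 v hv), ?_⟩, h2, h3⟩
      rw [← Finset.card_image_of_injOn h2]
      exact F.uniform _ h3

lemma cloneG_mem {𝔉 : Set (RGraph r)} (hc : Clonable 𝔉) {F : RGraph r} (hF : F ∈ 𝔉)
    (m : ℕ) (φ : ℕ → ℕ) (h : ∀ v < m, φ v < F.n) : cloneG F m φ ∈ 𝔉 :=
  hc F hF _ ⟨φ, cloneG_isBlowupMap F m φ h⟩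

lemma exists_size {𝔉 : Set (RGraph r)} (hc : Clonable 𝔉) {F0 : RGraph r} (hF0 : F0 ∈ 𝔉)
    (h1 : 1 ≤ F0.n) (m : ℕ) : ∃ F ∈ 𝔉, F.n = m :=
  ⟨cloneG F0 m (fun _ => 0), cloneG_mem hc hF0 m _ (fun _ _ => h1), rfl⟩

lemma link_card (F : RGraph r) (v : ℕ) :
    (link F v).card = (F.edges.filter fun e => v ∈ e).card := by
  apply Finset.card_image_of_injOn
  intro e1 h1 e2 h2 h
  rw [Finset.mem_coe, Finset.mem_filter] at h1 h2
  have h' : e1.erase v = e2.erase v := h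
  rw [← Finset.insert_erase h1.2, ← Finset.insert_erase h2.2, h']

lemma sum_deg (F : RGraph r) :
    ∑ v ∈ Finset.range F.n, (F.edges.filter fun e => v ∈ e).card = r * F.edges.card := by
  have h1 : ∀ v : ℕ, (F.edges.filter fun e => v ∈ e).card
      = ∑ e ∈ F.edges, if v ∈ e then 1 else 0 := fun v => Finset.card_filter _ _
  simp_rw [h1]
  rw [Finset.sum_comm]
  have h2 : ∀ e ∈ F.edges, (∑ v ∈ Finset.range F.n, if v ∈ e then 1 else 0) = r := by
    intro e he
    rw [← Finset.card_filter]
    have h3 : (Finset.range F.n).filter (fun v => v ∈ e) = e := by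
      apply Finset.Subset.antisymm
      · intro v hv; exact (Finset.mem_filter.1 hv).2
      · intro v hv; exact Finset.mem_filter.2 ⟨Finset.mem_range.2 (F.valid e he v hv), hv⟩
    rw [h3, F.uniform e he]
  rw [Finset.sum_congr rfl h2, Finset.sum_const, smul_eq_mul, mul_comm]

lemma exists_deg (F : RGraph r) (hn : 1 ≤ F.n) :
    ∃ v < F.n, r * F.edges.card ≤ F.n * (link F v).card := by
  have hsum : ∑ _v ∈ Finset.range F.n, r * F.edges.card
      ≤ ∑ v ∈ Finset.range F.n, F.n * (F.edges.filter fun e => v ∈ e).card := by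
    rw [Finset.sum_const, ← Finset.mul_sum, sum_deg, Finset.card_range, smul_eq_mul]
  obtain ⟨v, hv, h⟩ := Finset.exists_le_of_sum_le ⟨0, Finset.mem_range.2 hn⟩ hsum
  exact ⟨v, Finset.mem_range.1 hv, by rwa [link_card]⟩

lemma mem_link_iff (F : RGraph r) (v : ℕ) (I : Finset ℕ) :
    I ∈ link F v ↔ ∃ e ∈ F.edges, v ∈ e ∧ e.erase v = I := by
  simp [link, Finset.mem_image, Finset.mem_filter, and_assoc]

lemma clone_bound {𝔉 : Set (RGraph r)} (hc : Clonable 𝔉) {F : RGraph r} (hF : F ∈ 𝔉)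
    {v : ℕ} (hv : v < F.n) (k : ℕ) :
    ∃ G ∈ 𝔉, G.n = F.n + k ∧ F.edges.card + k * (link F v).card ≤ G.edges.card := by
  set φ : ℕ → ℕ := fun w => if w < F.n then w else v with hφ
  have hφlt : ∀ w < F.n + k, φ w < F.n := by
    intro w _
    by_cases h : w < F.n <;> simp [hφ, h, hv]
  refine ⟨cloneG F (F.n + k) φ, cloneG_mem hc hF _ _ hφlt, rfl, ?_⟩
  have hmap := cloneG_isBlowupMap F (F.n + k) φ hφlt
  have hmem := hmap.2
  -- facts about links
  have hlink : ∀ I ∈ link F v, (∀ u ∈ I, u < F.n) ∧ v ∉ I ∧ insert v I ∈ F.edges := by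
    intro I hI
    obtain ⟨e, he, hve, hIe⟩ := (mem_link_iff F v I).1 hI
    subst hIe
    exact ⟨fun u hu => F.valid e he u (Finset.mem_of_mem_erase hu), Finset.notMem_erase v e,
      by rwa [Finset.insert_erase hve]⟩
  set B : Finset (Finset ℕ) :=
    F.edges ∪ (Finset.Ico F.n (F.n + k)).biUnion
      (fun w => (link F v).image (insert w)) with hB
  have hsub : B ⊆ (cloneG F (F.n + k) φ).edges := by
    intro e he
    rw [hB, Finset.mem_union] at he
    rcases he with he | he
    · -- old edge
      have hid : ∀ u ∈ e, φ u = u := fun u hu => if_pos (F.valid e he u hu)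
      rw [hmem e]
      refine ⟨fun u hu => lt_of_lt_of_le (F.valid e he u hu) (Nat.le_add_right _ _), ?_, ?_⟩
      · intro a ha b hb hab
        rwa [hid a ha, hid b hb] at hab
      · rw [Finset.image_congr (fun u hu => hid u hu), Finset.image_id']
        exact he
    · -- new edge
      simp only [Finset.mem_biUnion, Finset.mem_Ico, Finset.mem_image] at he
      obtain ⟨w, ⟨hw1, hw2⟩, I, hI, rfl⟩ := he
      obtain ⟨hIlt, hvI, hins⟩ := hlink I hI
      have hwI : w ∉ I := fun h => absurd (hIlt w h) (not_lt.2 hw1)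
      have hφw : φ w = v := if_neg (not_lt.2 hw1)
      have hφI : ∀ u ∈ I, φ u = u := fun u hu => if_pos (hIlt u hu)
      rw [hmem _]
      refine ⟨?_, ?_, ?_⟩
      · intro u hu
        rcases Finset.mem_insert.1 hu with rfl | hu
        · exact hw2
        · exact lt_of_lt_of_le (hIlt u hu) (Nat.le_add_right _ _)
      · intro a ha b hb hab
        rcases Finset.mem_insert.1 (Finset.mem_coe.1 ha) with rfl | ha' <;>
          rcases Finset.mem_insert.1 (Finset.mem_coe.1 hb) with rfl | hb'
        · rfl
        · rw [hφw, hφI b hb'] at hab; exact absurd (hab ▸ hb') hvI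
        · rw [hφw, hφI a ha'] at hab; exact absurd (hab ▸ ha') hvI
        · rwa [hφI a ha', hφI b hb'] at hab
      · rw [Finset.image_insert, hφw, Finset.image_congr (fun u hu => hφI u hu),
          Finset.image_id']
        exact hins
  have hcard : F.edges.card + k * (link F v).card ≤ B.card := by
    have hdisj : Disjoint F.edges
        ((Finset.Ico F.n (F.n + k)).biUnion (fun w => (link F v).image (insert w))) := by
      rw [Finset.disjoint_left]
      intro e he hmem'
      simp only [Finset.mem_biUnion, Finset.mem_Ico, Finset.mem_image] at hmem'
      obtain ⟨w, ⟨hw1, _⟩, I, _, rfl⟩ := hmem'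
      exact absurd (F.valid _ he w (Finset.mem_insert_self w I)) (not_lt.2 hw1)
    have hpair : ∀ w1 ∈ Finset.Ico F.n (F.n + k), ∀ w2 ∈ Finset.Ico F.n (F.n + k), w1 ≠ w2 →
        Disjoint ((link F v).image (insert w1)) ((link F v).image (insert w2)) := by
      intro w1 hw1 w2 _ hne
      rw [Finset.disjoint_left]
      rintro e he1 he2
      simp only [Finset.mem_image] at he1 he2
      obtain ⟨I1, hI1, rfl⟩ := he1
      obtain ⟨I2, hI2, he⟩ := he2
      have hw1mem : w1 ∈ insert w2 I2 := he ▸ Finset.mem_insert_self w1 I1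
      rcases Finset.mem_insert.1 hw1mem with h | h
      · exact hne h
      · exact absurd ((hlink I2 hI2).1 w1 h) (not_lt.2 (Finset.mem_Ico.1 hw1).1)
    have himg : ∀ w ∈ Finset.Ico F.n (F.n + k),
        ((link F v).image (insert w)).card = (link F v).card := by
      intro w hw
      apply Finset.card_image_of_injOn
      intro I1 h1 I2 h2 h
      have hw1 : w ∉ I1 := fun hmem' =>
        absurd ((hlink I1 (Finset.mem_coe.1 h1)).1 w hmem') (not_lt.2 (Finset.mem_Ico.1 hw).1)
      have hw2 : w ∉ I2 := fun hmem' =>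
        absurd ((hlink I2 (Finset.mem_coe.1 h2)).1 w hmem') (not_lt.2 (Finset.mem_Ico.1 hw).1)
      rw [← Finset.erase_insert hw1, ← Finset.erase_insert hw2, h]
    rw [hB, Finset.card_union_of_disjoint hdisj, Finset.card_biUnion hpair,
      Finset.sum_congr rfl himg, Finset.sum_const, Nat.card_Ico, smul_eq_mul,
      Nat.add_sub_cancel_left]
  exact le_trans hcard (Finset.card_le_card hsub)

lemma mFam_step {𝔉 : Set (RGraph r)} (hc : Clonable 𝔉)
    (hex : ∀ m, ∃ F ∈ 𝔉, F.n = m) (n k : ℕ) (hn : 1 ≤ n) :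
    ∃ d : ℕ, r * mFam 𝔉 n ≤ n * d ∧ mFam 𝔉 n + k * d ≤ mFam 𝔉 (n + k) := by
  obtain ⟨F, hF, hFn, hcard⟩ := mFam_exists (hex n)
  obtain ⟨v, hv, hdeg⟩ := exists_deg F (by omega)
  obtain ⟨G, hG, hGn, hGcard⟩ := clone_bound hc hF hv k
  refine ⟨(link F v).card, by rw [← hcard, ← hFn]; exact hdeg, ?_⟩
  calc mFam 𝔉 n + k * (link F v).card = F.edges.card + k * (link F v).card := by rw [hcard]
    _ ≤ G.edges.card := hGcard
    _ ≤ mFam 𝔉 (n + k) := le_mFam hG (by rw [hGn, hFn])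

lemma prod_shift (x : ℝ) (r : ℕ) :
    x * ∏ i ∈ Finset.range r, (x + 1 + i) = (∏ i ∈ Finset.range r, (x + i)) * (x + r) := by
  induction r with
  | zero => simp
  | succ r ih =>
    rw [Finset.prod_range_succ, Finset.prod_range_succ]
    push_cast
    linear_combination (x + 1 + (r : ℝ)) * ih

lemma mFam_le_choose (𝔉 : Set (RGraph r)) (n : ℕ) : mFam 𝔉 n ≤ n.choose r :=
  csSup_le' (by rintro k ⟨F, _, rfl, rfl⟩; exact edges_card_le F)

end AuxGrowth

/-- For a clonable family `𝔉` and every `ε > 0` there exists `n0` such that for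
all `n2 ≥ n1 ≥ n0`, `m(𝔉, n2) ≥ m(𝔉, n1) + (n2 - n1)(r·m(𝔉) - ε) n1^{r-1}`. -/
theorem mFam_growth {r : ℕ} (𝔉 : Set (RGraph r)) (hc : Clonable 𝔉) :
    ∀ ε > (0 : ℝ), ∃ n0 : ℕ, ∀ n1 n2 : ℕ, n0 ≤ n1 → n1 ≤ n2 →
      (mFam 𝔉 n1 : ℝ) + ((n2 : ℝ) - (n1 : ℝ)) * ((r : ℝ) * mDen 𝔉 - ε) * (n1 : ℝ) ^ (r - 1) ≤
        (mFam 𝔉 n2 : ℝ) := by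
  intro ε hε
  by_cases hex0 : ∃ F ∈ 𝔉, 1 ≤ F.n
  · -- main case: 𝔉 has a member with at least one vertex
    obtain ⟨F0, hF0, hF01⟩ := hex0
    have hex : ∀ m, ∃ F ∈ 𝔉, F.n = m := exists_size hc hF0 hF01
    have hstep := mFam_step hc hex
    set P : ℕ → ℝ := fun n => ∏ i ∈ Finset.range r, ((n : ℝ) + i) with hP
    have hPpos : ∀ n : ℕ, 1 ≤ n → 0 < P n := by
      intro n hn
      apply Finset.prod_pos
      intro i _
      have h1 : (1:ℝ) ≤ (n:ℝ) := by exact_mod_cast hn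
      have h2 : (0:ℝ) ≤ (i:ℝ) := Nat.cast_nonneg _
      linarith
    set b : ℕ → ℝ := fun n => (mFam 𝔉 n : ℝ) / P n with hb
    have hrec : ∀ n : ℕ, 1 ≤ n → ((n:ℝ) + r) * (mFam 𝔉 n : ℝ) ≤ (n:ℝ) * (mFam 𝔉 (n+1) : ℝ) := by
      intro n hn
      obtain ⟨d, hd1, hd2⟩ := hstep n 1 hn
      have hd1' : (r:ℝ) * (mFam 𝔉 n : ℝ) ≤ (n:ℝ) * d := by exact_mod_cast hd1
      have hd2' : (mFam 𝔉 n : ℝ) + (d:ℝ) ≤ (mFam 𝔉 (n+1) : ℝ) := by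
        rw [one_mul] at hd2; exact_mod_cast hd2
      nlinarith [mul_le_mul_of_nonneg_left hd2' (Nat.cast_nonneg (α := ℝ) n)]
    have hbmono : ∀ n : ℕ, 1 ≤ n → b n ≤ b (n+1) := by
      intro n hn
      have h1 := hPpos n hn
      have h2 := hPpos (n+1) (by omega)
      rw [hb, div_le_div_iff₀ h1 h2]
      have hid : (n:ℝ) * P (n+1) = P n * ((n:ℝ) + r) := by
        simp only [hP]
        push_cast
        exact prod_shift (n:ℝ) r
      have hnpos : (0:ℝ) < n := by exact_mod_cast hn
      have key : (n:ℝ) * ((mFam 𝔉 n : ℝ) * P (n+1)) ≤ (n:ℝ) * ((mFam 𝔉 (n+1) : ℝ) * P n) := by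
        calc (n:ℝ) * ((mFam 𝔉 n : ℝ) * P (n+1)) = (mFam 𝔉 n : ℝ) * ((n:ℝ) * P (n+1)) := by ring
          _ = ((n:ℝ) + r) * (mFam 𝔉 n : ℝ) * P n := by rw [hid]; ring
          _ ≤ (n:ℝ) * (mFam 𝔉 (n+1) : ℝ) * P n :=
              mul_le_mul_of_nonneg_right (hrec n hn) h1.le
          _ = (n:ℝ) * ((mFam 𝔉 (n+1) : ℝ) * P n) := by ring
      exact le_of_mul_le_mul_left key hnpos
    have hbbdd : ∀ n : ℕ, 1 ≤ n → b n ≤ 1 := by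
      intro n hn
      rw [hb, div_le_one (hPpos n hn)]
      have h1 : (mFam 𝔉 n : ℝ) ≤ ((n:ℝ))^r := by
        calc (mFam 𝔉 n : ℝ) ≤ ((n.choose r : ℕ) : ℝ) := by exact_mod_cast mFam_le_choose 𝔉 n
          _ ≤ ((n^r : ℕ) : ℝ) := by exact_mod_cast Nat.choose_le_pow n r
          _ = ((n:ℝ))^r := by push_cast; ring
      refine h1.trans ?_
      calc ((n:ℝ))^r = ∏ _i ∈ Finset.range r, (n:ℝ) := by
            rw [Finset.prod_const, Finset.card_range]
        _ ≤ ∏ i ∈ Finset.range r, ((n:ℝ) + i) :=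
            Finset.prod_le_prod (fun i _ => Nat.cast_nonneg n)
              (fun i _ => le_add_of_nonneg_right (Nat.cast_nonneg i))
        _ = P n := rfl
    set L : ℝ := ⨆ n : ℕ, b (n+1) with hL
    have hmono' : Monotone (fun n : ℕ => b (n+1)) :=
      monotone_nat_of_le_succ (fun n => hbmono (n+1) (by omega))
    have hbdd' : BddAbove (Set.range fun n : ℕ => b (n+1)) :=
      ⟨1, by rintro x ⟨n, rfl⟩; exact hbbdd (n+1) (by omega)⟩
    have htend1 : Tendsto (fun n : ℕ => b (n+1)) atTop (𝓝 L) := tendsto_atTop_ciSup hmono' hbdd'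
    have hbtend : Tendsto b atTop (𝓝 L) := (tendsto_add_atTop_iff_nat 1).mp htend1
    have hctend : Tendsto (fun n : ℕ => P n / (n:ℝ)^r) atTop (𝓝 1) := by
      have h2 : Tendsto (fun n : ℕ => ∏ i ∈ Finset.range r, (1 + (i:ℝ)/(n:ℝ))) atTop
          (𝓝 (∏ _i ∈ Finset.range r, (1:ℝ))) := by
        apply tendsto_finset_prod
        intro i _
        have h0 : Tendsto (fun n : ℕ => (i:ℝ)/(n:ℝ)) atTop (𝓝 0) :=
          Tendsto.div_atTop tendsto_const_nhds tendsto_natCast_atTop_atTop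
        have h1 := (tendsto_const_nhds : Tendsto (fun _ : ℕ => (1:ℝ)) atTop (𝓝 1)).add h0
        simpa using h1
      rw [Finset.prod_const_one] at h2
      refine Tendsto.congr' ?_ h2
      filter_upwards [eventually_ge_atTop 1] with n hn
      have hn0 : ((n:ℝ)) ≠ 0 := by
        have : (1:ℝ) ≤ (n:ℝ) := by exact_mod_cast hn
        linarith
      show ∏ i ∈ Finset.range r, (1 + (i:ℝ)/(n:ℝ))
          = (∏ i ∈ Finset.range r, ((n:ℝ) + i)) / (n:ℝ)^r
      rw [show ((n:ℝ))^r = ∏ _i ∈ Finset.range r, (n:ℝ) from by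
        rw [Finset.prod_const, Finset.card_range], ← Finset.prod_div_distrib]
      apply Finset.prod_congr rfl
      intro i _
      field_simp
    have hatend : Tendsto (fun n : ℕ => (mFam 𝔉 n : ℝ) / (n:ℝ)^r) atTop (𝓝 L) := by
      have heq : (fun n : ℕ => b n * (P n / (n:ℝ)^r)) =ᶠ[atTop]
          (fun n : ℕ => (mFam 𝔉 n : ℝ) / (n:ℝ)^r) := by
        filter_upwards [eventually_ge_atTop 1] with n hn
        have h1 := (hPpos n hn).ne'
        rw [hb]
        field_simp
      have h3 := hbtend.mul hctend
      rw [mul_one] at h3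
      exact Tendsto.congr' heq h3
    have hmden : mDen 𝔉 = L := hatend.limUnder_eq
    rcases Nat.eq_zero_or_pos r with hr | hr
    · -- r = 0: only monotonicity is needed
      refine ⟨1, fun n1 n2 h1 h2 => ?_⟩
      obtain ⟨d, _, hd2⟩ := hstep n1 (n2 - n1) h1
      rw [show n1 + (n2 - n1) = n2 by omega] at hd2
      have hd2' : (mFam 𝔉 n1 : ℝ) ≤ (mFam 𝔉 n2 : ℝ) := by
        exact_mod_cast le_trans (Nat.le_add_right _ _) hd2
      have hA : (0:ℝ) ≤ (n2:ℝ) - (n1:ℝ) := by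
        rw [sub_nonneg]; exact_mod_cast h2
      subst hr
      have hpow : ((n1:ℝ)) ^ (0 - 1) = 1 := by norm_num
      rw [hpow]
      push_cast
      nlinarith [mul_nonneg hA hε.le]
    · -- r ≥ 1
      have hrpos : (0:ℝ) < r := by exact_mod_cast hr
      have hεr : 0 < ε / r := by positivity
      have hev : ∀ᶠ n : ℕ in atTop, L - ε/r < (mFam 𝔉 n : ℝ)/(n:ℝ)^r :=
        hatend.eventually (eventually_gt_nhds (by linarith))
      obtain ⟨N, hN⟩ := eventually_atTop.1 hev
      refine ⟨max N 1, fun n1 n2 h1 h2 => ?_⟩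
      have hn1 : 1 ≤ n1 := le_trans (le_max_right _ _) h1
      have hn1' : N ≤ n1 := le_trans (le_max_left _ _) h1
      obtain ⟨d, hd1, hd2⟩ := hstep n1 (n2 - n1) hn1
      rw [show n1 + (n2 - n1) = n2 by omega] at hd2
      have hd1' : (r:ℝ) * (mFam 𝔉 n1 : ℝ) ≤ (n1:ℝ) * d := by exact_mod_cast hd1
      have hd2' : (mFam 𝔉 n1 : ℝ) + ((n2 - n1 : ℕ):ℝ) * d ≤ (mFam 𝔉 n2 : ℝ) := by
        exact_mod_cast hd2
      have hK : ((n2 - n1 : ℕ):ℝ) = (n2:ℝ) - (n1:ℝ) := Nat.cast_sub h2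
      have hp : (0:ℝ) < (n1:ℝ) := by exact_mod_cast hn1
      have ha := hN n1 hn1'
      have ha' : (L - ε/r) * (n1:ℝ)^r < (mFam 𝔉 n1 : ℝ) := (lt_div_iff₀ (pow_pos hp r)).1 ha
      have hpow : (n1:ℝ)^r = (n1:ℝ)^(r-1) * (n1:ℝ) := by
        rw [← pow_succ]
        congr 1
        omega
      have hr0 : (r:ℝ) ≠ 0 := hrpos.ne'
      have key : ((r:ℝ)*L - ε) * (n1:ℝ)^(r-1) ≤ (d:ℝ) := by
        have h5 : ((r:ℝ)*L - ε) * (n1:ℝ)^(r-1) * (n1:ℝ) ≤ (d:ℝ) * (n1:ℝ) := by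
          have e1 : ((r:ℝ)*L - ε) * (n1:ℝ)^(r-1) * (n1:ℝ) = (r:ℝ) * ((L - ε/r) * (n1:ℝ)^r) := by
            rw [hpow]
            field_simp
          rw [e1]
          calc (r:ℝ) * ((L - ε/r) * (n1:ℝ)^r) ≤ (r:ℝ) * (mFam 𝔉 n1 : ℝ) :=
                mul_le_mul_of_nonneg_left ha'.le hrpos.le
            _ ≤ (n1:ℝ) * d := hd1'
            _ = (d:ℝ) * (n1:ℝ) := by ring
        exact le_of_mul_le_mul_right h5 hp
      rw [hmden, ← hK]
      have h6 := mul_le_mul_of_nonneg_left key (Nat.cast_nonneg (α := ℝ) (n2 - n1))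
      nlinarith [h6, hd2']
  · -- degenerate case: every member has no vertices
    have hm : ∀ n : ℕ, 1 ≤ n → mFam 𝔉 n = 0 := by
      intro n hn
      have hempty : {k | ∃ F ∈ 𝔉, F.n = n ∧ F.edges.card = k} = ∅ := by
        ext k
        simp only [Set.mem_setOf_eq, Set.mem_empty_iff_false, iff_false]
        rintro ⟨F, hF, hFn, _⟩
        exact hex0 ⟨F, hF, by omega⟩
      unfold mFam
      rw [hempty, csSup_empty]
      rfl
    have htend : Tendsto (fun n : ℕ => (mFam 𝔉 n : ℝ)/(n:ℝ)^r) atTop (𝓝 0) := by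
      refine Tendsto.congr' ?_ (tendsto_const_nhds (x := (0:ℝ)))
      filter_upwards [eventually_ge_atTop 1] with n hn
      rw [hm n hn]
      simp
    have hmden : mDen 𝔉 = 0 := htend.limUnder_eq
    refine ⟨1, fun n1 n2 h1 h2 => ?_⟩
    rw [hmden, hm n1 h1, hm n2 (le_trans h1 h2)]
    have hA : (0:ℝ) ≤ (n2:ℝ) - (n1:ℝ) := by
      rw [sub_nonneg]; exact_mod_cast h2
    have hB : (0:ℝ) ≤ (n1:ℝ)^(r-1) := pow_nonneg (Nat.cast_nonneg _) _
    push_cast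
    nlinarith [mul_nonneg (mul_nonneg hA hε.le) hB]

end TuranGT
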